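/- arXiv:1308.4469 — 3 statements merged into one kernel-verified Lean document; each statement's English description precedes it below -/
import Mathlib

section
/- In a preorder numbering of a forest, if V_j is a set of vertices with consecutive preorder labels, and A_j is the set of vertices not in V_j that lie on a path from some vertex of V_j to the roots (i.e., proper ancestors of vertices in V_j outside V_j), then A_j contains no two vertices at the same depth; hence |A_j| is at most the height of the forest. -/
/-- In a preorder numbering `p` of a forest (with proper-ancestor relation `anc`
and `depth` function), if `Vj` is a set of vertices with consecutive preorder
labels and `Aj` is the set of proper ancestors of vertices of `Vj` lying outside
`Vj`, then `Aj` contains no two distinct vertices at the same depth; hence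
`|Aj|` is at most the height `H` of the forest. -/
theorem stmt1 {V : Type*} [Fintype V]
    (p : V → ℕ) (hp : Function.Injective p)
    (anc : V → V → Prop) (depth : V → ℕ) (H : ℕ)
    (hanc_lt : ∀ a b, anc a b → p a < p b)
    (hdepth : ∀ a b, anc a b → depth a < depth b)
    (hinterval : ∀ a v w, anc a v → p a < p w → p w ≤ p v → anc a w)
    (hsame : ∀ q r, depth q = depth r → p q < p r → ∀ x, anc q x → p x < p r)
    (hH : ∀ v, depth v < H)
    (l u : ℕ)
    (Vj : Set V) (hVj : Vj = {v | l ≤ p v ∧ p v ≤ u})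
    (Aj : Set V) (hAj : Aj = {a | a ∉ Vj ∧ ∃ v ∈ Vj, anc a v}) :
    (∀ a ∈ Aj, ∀ b ∈ Aj, depth a = depth b → a = b) ∧ Aj.ncard ≤ H := by
  subst hVj hAj
  have key : ∀ a ∈ {a | a ∉ {v | l ≤ p v ∧ p v ≤ u} ∧ ∃ v ∈ {v | l ≤ p v ∧ p v ≤ u}, anc a v},
      ∀ b ∈ {a | a ∉ {v | l ≤ p v ∧ p v ≤ u} ∧ ∃ v ∈ {v | l ≤ p v ∧ p v ≤ u}, anc a v},
      depth a = depth b → p a < p b → False := by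
    intro a ha b hb hd hab
    obtain ⟨hbn, v, hv, hbv⟩ := hb
    obtain ⟨han, w, hw, haw⟩ := ha
    have h1 : p w < p b := hsame a b hd hab w haw
    have h2 : p b < p v := hanc_lt b v hbv
    exact hbn ⟨le_of_lt (lt_of_le_of_lt hw.1 h1), le_trans h2.le hv.2⟩
  have hinj : ∀ a ∈ {a | a ∉ {v | l ≤ p v ∧ p v ≤ u} ∧ ∃ v ∈ {v | l ≤ p v ∧ p v ≤ u}, anc a v},
      ∀ b ∈ {a | a ∉ {v | l ≤ p v ∧ p v ≤ u} ∧ ∃ v ∈ {v | l ≤ p v ∧ p v ≤ u}, anc a v},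
      depth a = depth b → a = b := by
    intro a ha b hb hd
    by_contra hne
    rcases lt_or_gt_of_ne (fun h => hne (hp h)) with h | h
    · exact key a ha b hb hd h
    · exact key b hb a ha hd.symm h
  refine ⟨hinj, ?_⟩
  have himg : depth '' {a | a ∉ {v | l ≤ p v ∧ p v ≤ u} ∧ ∃ v ∈ {v | l ≤ p v ∧ p v ≤ u}, anc a v}
      ⊆ Set.Iio H := by
    rintro x ⟨a, _, rfl⟩; exact hH a
  calc Set.ncard _ = (depth '' _).ncard := (Set.ncard_image_of_injOn hinj).symm
    _ ≤ (Set.Iio H).ncard := Set.ncard_le_ncard himg (Set.finite_Iio H)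
    _ = H := by rw [Set.ncard_eq_toFinset_card']; simp
end

section
/- In any triangle with circumradius R and inradius r satisfying R/r = ρ ≥ 2, every interior angle is at least α, where cos α = (1 + √(ρ(ρ−2)))/ρ. Moreover α ≤ π/3, with equality in the bound exactly for the equilateral triangle (ρ = 2). -/
open EuclideanGeometry Real InnerProductGeometry RealInnerProductSpace

noncomputable abbrev AspectE2 : Type := EuclideanSpace ℝ (Fin 2)

noncomputable def aspectDt (x y : AspectE2) : ℝ := x 0 * y 1 - x 1 * y 0

lemma aspect_cos_eq_one_sub (x : ℝ) : Real.cos x = 2 * Real.cos (x/2)^2 - 1 := by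
  have h := Real.cos_two_mul (x/2)
  rw [show 2*(x/2) = x by ring] at h
  linarith

lemma aspect_dt_inner (u x : AspectE2) :
    aspectDt u x = ⟪(WithLp.equiv 2 _).symm ![-(u 1), u 0], x⟫ := by
  simp [aspectDt, PiLp.inner_apply, Fin.sum_univ_two]; ring

lemma aspect_lagrange (u v : AspectE2) :
    ⟪u,u⟫ * ⟪v,v⟫ - ⟪u,v⟫ * ⟪u,v⟫ = (aspectDt u v)^2 := by
  simp only [aspectDt, PiLp.inner_apply, Fin.sum_univ_two, RCLike.inner_apply, conj_trivial]; ring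

lemma aspect_side (P Q S I : AspectE2) (r : ℝ) (hr : 0 < r)
    (hin : Metric.closedBall I r ⊆ convexHull ℝ {P, Q, S})
    (hor : 0 ≤ aspectDt (Q - P) (S - P)) :
    r * ‖Q - P‖ ≤ aspectDt (Q - P) (I - P) := by
  rcases eq_or_ne P Q with rfl | hPQ
  · simp [aspectDt]
  set u := Q - P with hu
  set n : AspectE2 := (WithLp.equiv 2 _).symm ![-(u 1), u 0] with hn
  have hnn : ⟪n, n⟫ = ⟪u, u⟫ := by
    simp only [hn, PiLp.inner_apply, Fin.sum_univ_two, RCLike.inner_apply, conj_trivial, WithLp.equiv_symm_apply, Matrix.cons_val_zero, Matrix.cons_val_one]; ring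
  have hnorm : ‖n‖ = ‖u‖ := by
    rw [← Real.sqrt_sq (norm_nonneg n), ← Real.sqrt_sq (norm_nonneg u),
      ← real_inner_self_eq_norm_sq, ← real_inner_self_eq_norm_sq, hnn]
  have hu0 : u ≠ 0 := sub_ne_zero.2 (Ne.symm hPQ)
  have hupos : 0 < ‖u‖ := norm_pos_iff.2 hu0
  have hconv : Convex ℝ {x : AspectE2 | ⟪n, P⟫ ≤ ⟪n, x⟫} := by
    refine convex_halfSpace_ge ⟨fun x y => inner_add_right _ _ _,
      fun c x => real_inner_smul_right _ _ _⟩ _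
  have hsub : convexHull ℝ {P, Q, S} ⊆ {x : AspectE2 | ⟪n, P⟫ ≤ ⟪n, x⟫} := by
    apply convexHull_min _ hconv
    refine Set.insert_subset (by simp only [Set.mem_setOf_eq]; exact le_refl _)
      (Set.insert_subset ?_ (Set.singleton_subset_iff.2 ?_))
    · have h : ⟪n, Q⟫ - ⟪n, P⟫ = aspectDt u u := by
        rw [aspect_dt_inner, ← hn, ← inner_sub_right, hu]
      have h0 : aspectDt u u = 0 := by simp [aspectDt]; ring
      simp only [Set.mem_setOf_eq]
      linarith
    · have h : ⟪n, S⟫ - ⟪n, P⟫ = aspectDt u (S - P) := by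
        rw [aspect_dt_inner, ← hn, ← inner_sub_right]
      simp only [Set.mem_setOf_eq]; linarith
  have hx0 : I - (r / ‖u‖) • n ∈ Metric.closedBall I r := by
    simp only [Metric.mem_closedBall, dist_eq_norm]
    rw [sub_sub_cancel_left, norm_neg, norm_smul, hnorm]
    rw [Real.norm_eq_abs, abs_of_pos (by positivity)]
    rw [div_mul_cancel₀ _ (ne_of_gt hupos)]
  have h1 := hsub (hin hx0)
  simp only [Set.mem_setOf_eq, inner_sub_right, real_inner_smul_right] at h1
  rw [hnn, real_inner_self_eq_norm_sq] at h1
  rw [aspect_dt_inner, ← hn, inner_sub_right]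
  have : r / ‖u‖ * ‖u‖ ^ 2 = r * ‖u‖ := by field_simp
  nlinarith [h1]

lemma aspect_sin_angle_abs (p1 p2 p3 : AspectE2) (h1 : p1 ≠ p2) (h3 : p3 ≠ p2)
    [Fact (Module.finrank ℝ AspectE2 = 2)] [Module.Oriented ℝ AspectE2 (Fin 2)] :
    Real.sin (∠ p1 p2 p3) = |Real.Angle.sin (∡ p1 p2 p3)| := by
  rw [EuclideanGeometry.angle_eq_abs_oangle_toReal h1 h3, ← Real.Angle.sin_toReal]
  rcases abs_choice (∡ p1 p2 p3).toReal with h | h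
  · rw [h, abs_of_nonneg (Real.sin_nonneg_of_nonneg_of_le_pi (by rw [← h]; positivity)
      (Real.Angle.toReal_le_pi _))]
  · have ht : (∡ p1 p2 p3).toReal ≤ 0 := by
      nlinarith [abs_nonneg (∡ p1 p2 p3).toReal]
    rw [h, Real.sin_neg, abs_of_nonpos (Real.sin_nonpos_of_nonpos_of_neg_pi_le ht
      (le_of_lt (Real.Angle.neg_pi_lt_toReal _)))]

lemma aspect_lawsin (A B C O : AspectE2) (R : ℝ) (hOA : dist O A = R) (hOB : dist O B = R)
    (hOC : dist O C = R) (hAB : A ≠ B) (hAC : A ≠ C) (hBC : B ≠ C) :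
    dist B C = 2 * R * Real.sin (∠ B A C) := by
  haveI : Fact (Module.finrank ℝ AspectE2 = 2) := ⟨finrank_euclideanSpace_fin⟩
  haveI : Module.Oriented ℝ AspectE2 (Fin 2) :=
    ⟨Module.Basis.orientation (EuclideanSpace.basisFun (Fin 2) ℝ).toBasis⟩
  have h := EuclideanGeometry.Sphere.dist_div_sin_oangle_eq_two_mul_radius
    (s := ⟨O, R⟩) (p₁ := B) (p₂ := A) (p₃ := C)
    (by simpa [EuclideanGeometry.mem_sphere, dist_comm] using hOB)
    (by simpa [EuclideanGeometry.mem_sphere, dist_comm] using hOA)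
    (by simpa [EuclideanGeometry.mem_sphere, dist_comm] using hOC)
    hAB.symm hBC hAC
  rw [aspect_sin_angle_abs B A C hAB.symm (Ne.symm hAC)]
  rcases eq_or_ne (|Real.Angle.sin (∡ B A C)|) 0 with h0 | h0
  · rw [h0] at h
    simp only [div_zero] at h
    have hR : R = 0 := by linarith
    rw [hR, dist_eq_zero] at hOA hOB
    exact absurd (hOA.symm.trans hOB) hAB
  · field_simp at h ⊢
    linarith [h]

lemma aspect_sin_angle_eq (B A C : AspectE2) (h : 0 < aspectDt (B - A) (C - A)) :
    Real.sin (∠ B A C) * (dist A B * dist A C) = aspectDt (B - A) (C - A) := by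
  have h2 := InnerProductGeometry.sin_angle_mul_norm_mul_norm (B - A) (C - A)
  rw [aspect_lagrange, Real.sqrt_sq h.le] at h2
  rw [show ∠ B A C = InnerProductGeometry.angle (B - A) (C - A) from rfl]
  rw [dist_eq_norm, dist_eq_norm, norm_sub_rev A B, norm_sub_rev A C]
  exact h2

set_option maxHeartbeats 2000000 in
lemma aspect_trig (x y z r R ρ : ℝ) (hr : 0 < r) (hR : 0 < R) (hρ : ρ = R / r) (hρ2 : 2 ≤ ρ)
    (hx0 : 0 < x) (hxpi : x < π) (hy0 : 0 < y) (hz0 : 0 < z)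
    (hsum : x + y + z = π)
    (hineq : r * (Real.sin x + (Real.sin y + Real.sin z)) ≤
      2 * R * Real.sin x * (Real.sin y * Real.sin z)) :
    Real.cos x ≤ (1 + Real.sqrt (ρ * (ρ - 2))) / ρ := by
  have hπ := Real.pi_pos
  obtain ⟨σ, hσdef⟩ : ∃ a, Real.sin (x/2) = a := ⟨_, rfl⟩
  obtain ⟨cσ, hcσdef⟩ : ∃ a, Real.cos (x/2) = a := ⟨_, rfl⟩
  obtain ⟨v, hvdef⟩ : ∃ a, Real.cos ((y-z)/2) = a := ⟨_, rfl⟩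
  have hσpos : 0 < σ := hσdef ▸ Real.sin_pos_of_pos_of_lt_pi (by linarith) (by linarith)
  have hσ1 : σ ≤ 1 := hσdef ▸ Real.sin_le_one _
  have hcσpos : 0 < cσ := hcσdef ▸ Real.cos_pos_of_mem_Ioo ⟨by linarith, by linarith⟩
  have hvpos : 0 < v := hvdef ▸ Real.cos_pos_of_mem_Ioo ⟨by linarith, by linarith⟩
  have hv1 : v ≤ 1 := hvdef ▸ Real.cos_le_one _
  have pythx : σ^2 + cσ^2 = 1 := by
    rw [← hσdef, ← hcσdef]; exact Real.sin_sq_add_cos_sq (x/2)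
  have hcosx : Real.cos x = 1 - 2*σ^2 := by
    have h := aspect_cos_eq_one_sub x; rw [hcσdef] at h; nlinarith
  have hsinx : Real.sin x = 2*σ*cσ := by
    have h := Real.sin_two_mul (x/2)
    rw [show 2*(x/2) = x by ring, hσdef, hcσdef] at h; linarith [h]
  have hsyz : Real.sin y + Real.sin z = 2 * cσ * v := by
    have h := Real.sin_sub_sin y (-z)
    rw [Real.sin_neg, show y - -z = y + z by ring, show y + -z = y - z by ring] at h
    rw [show (y+z)/2 = π/2 - x/2 by linarith, Real.sin_pi_div_two_sub] at h
    rw [hcσdef, hvdef] at h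
    linarith
  have hprod : Real.sin y * Real.sin z = v^2 - σ^2 := by
    have h1 : Real.cos (y-z) - Real.cos (y+z) = 2 * (Real.sin y * Real.sin z) := by
      rw [Real.cos_sub, Real.cos_add]; ring
    have h2 : Real.cos (y-z) = 2*v^2 - 1 := by
      have h := aspect_cos_eq_one_sub (y-z); rw [hvdef] at h; linarith
    have h3 : Real.cos (y+z) = 2*σ^2 - 1 := by
      rw [show y + z = π - x by linarith, Real.cos_pi_sub, hcosx]; ring
    linarith
  rw [hsinx, hsyz, hprod] at hineq
  have hcancel : (2*cσ*(σ+v)) * r ≤ (2*cσ*(σ+v)) * (2*R*σ*(v-σ)) := by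
    have e3 : (2*cσ*(σ+v)) * r = r * (2*σ*cσ + 2*cσ*v) := by ring
    have e4 : (2*cσ*(σ+v)) * (2*R*σ*(v-σ)) = 2*R*(2*σ*cσ)*(v^2-σ^2) := by ring
    rw [e3, e4]; exact hineq
  have hpos24 : (0:ℝ) < 2*cσ*(σ+v) := by positivity
  have h2 : r ≤ 2*R*σ*(v-σ) := le_of_mul_le_mul_left hcancel hpos24
  have h3 : r ≤ 2*R*σ*(1-σ) := by
    nlinarith [mul_nonneg (mul_nonneg (by linarith : (0:ℝ) ≤ 2*R) hσpos.le) (sub_nonneg.2 hv1)]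
  have hρpos : 0 < ρ := by linarith
  have hRρ : R = ρ * r := by rw [hρ]; field_simp
  have h4 : 1 ≤ 2*ρ*σ*(1-σ) := by
    rw [hRρ] at h3; nlinarith
  obtain ⟨s, hsdef⟩ : ∃ a, Real.sqrt (ρ * (ρ - 2)) = a := ⟨_, rfl⟩
  have hs0 : 0 ≤ s := hsdef ▸ Real.sqrt_nonneg _
  have hs : s^2 = ρ * (ρ - 2) := hsdef ▸ Real.sq_sqrt (by nlinarith)
  rw [hsdef]
  rw [hcosx, le_div_iff₀ hρpos]
  have e1 : 0 ≤ 4*ρ*σ^2*(2*ρ*σ - 2*ρ*σ^2 - 1) := by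
    apply mul_nonneg (by positivity); nlinarith
  have e2 : 1 ≤ (2*ρ*σ*(1-σ))^2 := by nlinarith
  obtain ⟨t, htdef⟩ : ∃ a, ρ - 1 - 2*ρ*σ^2 = a := ⟨_, rfl⟩
  have hst : t^2 ≤ s^2 := by rw [hs, ← htdef]; nlinarith [e1, e2]
  rcases le_or_gt t 0 with ht | ht
  · nlinarith [htdef]
  · have hts : t ≤ s := by nlinarith [hst, hs0, ht]
    nlinarith [htdef, hts]

lemma aspect_key (A B C I O : AspectE2) (r R ρ : ℝ) (hr : 0 < r) (hρ : ρ = R / r)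
    (hρ2 : 2 ≤ ρ)
    (hin : Metric.closedBall I r ⊆ convexHull ℝ {A, B, C})
    (hOA : dist O A = R) (hOB : dist O B = R) (hOC : dist O C = R)
    (hor : 0 ≤ aspectDt (B - A) (C - A)) :
    Real.cos (∠ B A C) ≤ (1 + Real.sqrt (ρ * (ρ - 2))) / ρ := by
  have hset1 : ({B, C, A} : Set AspectE2) = {A, B, C} := by ext w; simp; tauto
  have hset2 : ({C, A, B} : Set AspectE2) = {A, B, C} := by ext w; simp; tauto
  have hin1 : Metric.closedBall I r ⊆ convexHull ℝ {B, C, A} := by rw [hset1]; exact hin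
  have hin2 : Metric.closedBall I r ⊆ convexHull ℝ {C, A, B} := by rw [hset2]; exact hin
  have hor1 : 0 ≤ aspectDt (C - B) (A - B) := by
    have e : aspectDt (C-B) (A-B) = aspectDt (B-A) (C-A) := by simp [aspectDt]; ring
    linarith
  have hor2 : 0 ≤ aspectDt (A - C) (B - C) := by
    have e : aspectDt (A-C) (B-C) = aspectDt (B-A) (C-A) := by simp [aspectDt]; ring
    linarith
  have s1 := aspect_side A B C I r hr hin hor
  have s2 := aspect_side B C A I r hr hin1 hor1
  have s3 := aspect_side C A B I r hr hin2 hor2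
  have hiden : aspectDt (B-A) (C-A) =
      aspectDt (B-A) (I-A) + aspectDt (C-B) (I-B) + aspectDt (A-C) (I-C) := by
    simp [aspectDt]; ring
  have hsum : r * (‖B-A‖ + ‖C-B‖ + ‖A-C‖) ≤ aspectDt (B-A) (C-A) := by
    have e : r * (‖B-A‖ + ‖C-B‖ + ‖A-C‖) = r * ‖B-A‖ + r * ‖C-B‖ + r * ‖A-C‖ := by ring
    rw [e, hiden]; linarith
  have hnotall : ¬ (A = B ∧ A = C) := by
    rintro ⟨h1, h2⟩
    rw [← h1, ← h2] at hin
    have hsing : ({A, A, A} : Set AspectE2) = {A} := by simp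
    rw [hsing, convexHull_singleton] at hin
    have hI : I ∈ Metric.closedBall I r := Metric.mem_closedBall_self hr.le
    have hJ : I + EuclideanSpace.single (0 : Fin 2) r ∈ Metric.closedBall I r := by
      simp only [Metric.mem_closedBall, dist_eq_norm, add_sub_cancel_left]
      rw [EuclideanSpace.norm_single, Real.norm_eq_abs, abs_of_pos hr]
    have e1 : I = A := hin hI
    have e2 : I + EuclideanSpace.single (0 : Fin 2) r = A := hin hJ
    rw [← e1] at e2
    have e3 : EuclideanSpace.single (0 : Fin 2) r = 0 := by
      rwa [add_eq_left] at e2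
    have e4 : (EuclideanSpace.single (0 : Fin 2) r) 0 = r := by simp
    rw [e3] at e4
    simp at e4
    exact absurd e4.symm (ne_of_gt hr)
  have hpos : 0 < ‖B-A‖ + ‖C-B‖ + ‖A-C‖ := by
    rcases not_and_or.1 hnotall with h | h
    · have h1 : 0 < ‖B - A‖ := by
        rw [norm_sub_pos_iff]; exact fun hh => h (hh.symm)
      linarith [norm_nonneg (C-B), norm_nonneg (A-C)]
    · have h1 : 0 < ‖A - C‖ := by
        rw [norm_sub_pos_iff]; exact fun hh => h hh
      linarith [norm_nonneg (C-B), norm_nonneg (B-A)]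
  have hD : 0 < aspectDt (B-A) (C-A) := lt_of_lt_of_le (mul_pos hr hpos) hsum
  have hsin := aspect_sin_angle_eq B A C hD
  have hsx : 0 < Real.sin (∠ B A C) := by
    by_contra hcon
    push_neg at hcon
    nlinarith [mul_nonneg (dist_nonneg (x := A) (y := B)) (dist_nonneg (x := A) (y := C))]
  have hcpos : 0 < dist A B * dist A C := by nlinarith [Real.sin_le_one (∠ B A C)]
  have hAB : A ≠ B := by
    rcases mul_pos_iff.1 hcpos with ⟨h1, _⟩ | ⟨h1, _⟩
    · exact dist_pos.1 h1
    · linarith [dist_nonneg (x := A) (y := B)]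
  have hAC : A ≠ C := by
    rcases mul_pos_iff.1 hcpos with ⟨_, h1⟩ | ⟨_, h1⟩
    · exact dist_pos.1 h1
    · linarith [dist_nonneg (x := A) (y := C)]
  have hR : 0 < R := by
    rcases lt_or_eq_of_le (hOA ▸ dist_nonneg (x := O) (y := A)) with h | h
    · exact h
    · exfalso
      rw [← h, dist_eq_zero] at hOA hOB
      exact hAB (hOA.symm.trans hOB)
  have hBC : B ≠ C := by
    intro h
    rw [← h] at hsx
    have : ∠ B A B = 0 := by
      rw [show ∠ B A B = InnerProductGeometry.angle (B - A) (B - A) from rfl]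
      exact InnerProductGeometry.angle_self (sub_ne_zero.2 (Ne.symm hAB))
    rw [this, Real.sin_zero] at hsx
    exact lt_irrefl _ hsx
  have la := aspect_lawsin A B C O R hOA hOB hOC hAB hAC hBC
  have lb := aspect_lawsin B A C O R hOB hOA hOC (Ne.symm hAB) hBC hAC
  have lc := aspect_lawsin C A B O R hOC hOA hOB (Ne.symm hAC) (Ne.symm hBC) hAB
  have hsy : 0 < Real.sin (∠ A B C) := by nlinarith [dist_pos.2 hAC, lb]
  have hsz : 0 < Real.sin (∠ A C B) := by nlinarith [dist_pos.2 hAB, lc]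
  have hx0 : 0 < ∠ B A C := by
    rcases lt_or_eq_of_le (EuclideanGeometry.angle_nonneg B A C) with h | h
    · exact h
    · exfalso; rw [← h, Real.sin_zero] at hsx; exact lt_irrefl _ hsx
  have hxpi : ∠ B A C < π := by
    rcases lt_or_eq_of_le (EuclideanGeometry.angle_le_pi B A C) with h | h
    · exact h
    · exfalso; rw [h, Real.sin_pi] at hsx; exact lt_irrefl _ hsx
  have hy0 : 0 < ∠ A B C := by
    rcases lt_or_eq_of_le (EuclideanGeometry.angle_nonneg A B C) with h | h
    · exact h
    · exfalso; rw [← h, Real.sin_zero] at hsy; exact lt_irrefl _ hsy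
  have hz0 : 0 < ∠ A C B := by
    rcases lt_or_eq_of_le (EuclideanGeometry.angle_nonneg A C B) with h | h
    · exact h
    · exfalso; rw [← h, Real.sin_zero] at hsz; exact lt_irrefl _ hsz
  have hsum3 : ∠ B A C + ∠ A B C + ∠ A C B = π := by
    have h := EuclideanGeometry.angle_add_angle_add_angle_eq_pi
      (p₁ := C) (p₂ := A) (p₃ := B) hAC
    rw [EuclideanGeometry.angle_comm C A B, EuclideanGeometry.angle_comm B C A] at h
    linarith
  have hineq : r * (Real.sin (∠ B A C) + (Real.sin (∠ A B C) + Real.sin (∠ A C B))) ≤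
      2 * R * Real.sin (∠ B A C) * (Real.sin (∠ A B C) * Real.sin (∠ A C B)) := by
    have hsum' : r * (dist A B + dist B C + dist A C) ≤
        Real.sin (∠ B A C) * (dist A B * dist A C) := by
      rw [hsin]
      have e1 : ‖B-A‖ = dist A B := by rw [dist_eq_norm, norm_sub_rev]
      have e2 : ‖C-B‖ = dist B C := by rw [dist_eq_norm, norm_sub_rev]
      have e3 : ‖A-C‖ = dist A C := by rw [dist_eq_norm]
      rw [e1, e2, e3] at hsum
      exact hsum
    rw [la, lb, lc] at hsum'
    apply le_of_mul_le_mul_left _ (show (0:ℝ) < 2*R by linarith)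
    have e4 : 2*R * (r * (Real.sin (∠ B A C) + (Real.sin (∠ A B C) + Real.sin (∠ A C B)))) =
        r * (2 * R * Real.sin (∠ A C B) + 2 * R * Real.sin (∠ B A C) +
          2 * R * Real.sin (∠ A B C)) := by ring
    have e5 : 2*R * (2 * R * Real.sin (∠ B A C) *
        (Real.sin (∠ A B C) * Real.sin (∠ A C B))) =
        Real.sin (∠ B A C) * (2 * R * Real.sin (∠ A C B) *
          (2 * R * Real.sin (∠ A B C))) := by ring
    rw [e4, e5]
    exact hsum'
  exact aspect_trig (∠ B A C) (∠ A B C) (∠ A C B) r R ρ hr hR hρ hρ2 hx0 hxpi hy0 hz0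
    hsum3 hineq

lemma aspect_arccos_mono {a b : ℝ} (h : a ≤ b) : Real.arccos b ≤ Real.arccos a := by
  rw [Real.arccos_eq_pi_div_two_sub_arcsin, Real.arccos_eq_pi_div_two_sub_arcsin]
  linarith [Real.monotone_arcsin h]

set_option maxHeartbeats 2000000 in
/-- In a triangle `ABC` containing a disk of radius `r` and contained in a disk of
radius `R` (in particular when these are the incircle and circumcircle), with
`ρ = R/r ≥ 2`, every interior angle is at least `α = arccos((1 + √(ρ(ρ-2)))/ρ)`.
Moreover `α ≤ π/3`, with equality exactly when `ρ = 2` (the equilateral case). -/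
theorem stmt5 (A B C I O : EuclideanSpace ℝ (Fin 2)) (r R ρ : ℝ)
    (hr : 0 < r) (hρ : ρ = R / r) (hρ2 : 2 ≤ ρ)
    (hin : Metric.closedBall I r ⊆ convexHull ℝ {A, B, C})
    (hcir : dist O A = R ∧ dist O B = R ∧ dist O C = R) :
    (Real.arccos ((1 + Real.sqrt (ρ * (ρ - 2))) / ρ) ≤ ∠ B A C ∧
     Real.arccos ((1 + Real.sqrt (ρ * (ρ - 2))) / ρ) ≤ ∠ A B C ∧
     Real.arccos ((1 + Real.sqrt (ρ * (ρ - 2))) / ρ) ≤ ∠ A C B) ∧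
    Real.arccos ((1 + Real.sqrt (ρ * (ρ - 2))) / ρ) ≤ π / 3 ∧
    (Real.arccos ((1 + Real.sqrt (ρ * (ρ - 2))) / ρ) = π / 3 ↔ ρ = 2) := by
  obtain ⟨hOA, hOB, hOC⟩ := hcir
  have hρpos : (0:ℝ) < ρ := by linarith
  have hs0 : 0 ≤ Real.sqrt (ρ * (ρ - 2)) := Real.sqrt_nonneg _
  have hs : (Real.sqrt (ρ * (ρ - 2)))^2 = ρ * (ρ - 2) :=
    Real.sq_sqrt (by nlinarith)
  obtain ⟨s, hsdef⟩ : ∃ a, Real.sqrt (ρ * (ρ - 2)) = a := ⟨_, rfl⟩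
  rw [hsdef] at hs0 hs
  have hK1 : (1 + Real.sqrt (ρ * (ρ - 2))) / ρ ≤ 1 := by
    rw [hsdef, div_le_one hρpos]
    nlinarith [hs, hs0]
  have hKhalf : (1:ℝ)/2 ≤ (1 + Real.sqrt (ρ * (ρ - 2))) / ρ := by
    rw [hsdef, div_le_div_iff₀ (by norm_num) hρpos]
    nlinarith [hs, hs0]
  have hKm1 : (-1:ℝ) ≤ (1 + Real.sqrt (ρ * (ρ - 2))) / ρ := by linarith
  have angle_bound : ∀ P Q S : AspectE2, Real.cos (∠ Q P S) ≤
      (1 + Real.sqrt (ρ * (ρ - 2))) / ρ →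
      Real.arccos ((1 + Real.sqrt (ρ * (ρ - 2))) / ρ) ≤ ∠ Q P S := by
    intro P Q S h
    have h2 := aspect_arccos_mono h
    rwa [Real.arccos_cos (EuclideanGeometry.angle_nonneg Q P S)
      (EuclideanGeometry.angle_le_pi Q P S)] at h2
  have hinperm : ∀ P Q S : AspectE2, ({P, Q, S} : Set AspectE2) = {A, B, C} →
      Metric.closedBall I r ⊆ convexHull ℝ {P, Q, S} := by
    intro P Q S h; rw [h]; exact hin
  constructor
  · rcases le_total 0 (aspectDt (B - A) (C - A)) with hor | hor
    · refine ⟨angle_bound A B C (aspect_key A B C I O r R ρ hr hρ hρ2 hin hOA hOB hOC hor),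
        ?_, ?_⟩
      · have h := aspect_key B C A I O r R ρ hr hρ hρ2
          (hinperm B C A (by ext w; simp; tauto)) hOB hOC hOA
          (by have e : aspectDt (C-B) (A-B) = aspectDt (B-A) (C-A) := by
                simp [aspectDt]; ring
              linarith)
        rw [EuclideanGeometry.angle_comm C B A] at h
        exact angle_bound B A C h
      · exact angle_bound C A B (aspect_key C A B I O r R ρ hr hρ hρ2
          (hinperm C A B (by ext w; simp; tauto)) hOC hOA hOB
          (by have e : aspectDt (A-C) (B-C) = aspectDt (B-A) (C-A) := by
                simp [aspectDt]; ring
              linarith))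
    · refine ⟨?_, ?_, ?_⟩
      · have h := aspect_key A C B I O r R ρ hr hρ hρ2
          (hinperm A C B (by ext w; simp; tauto)) hOA hOC hOB
          (by have e : aspectDt (C-A) (B-A) = -aspectDt (B-A) (C-A) := by
                simp [aspectDt]; ring
              linarith)
        rw [EuclideanGeometry.angle_comm C A B] at h
        exact angle_bound A B C h
      · exact angle_bound B A C (aspect_key B A C I O r R ρ hr hρ hρ2
          (hinperm B A C (by ext w; simp; tauto)) hOB hOA hOC
          (by have e : aspectDt (A-B) (C-B) = -aspectDt (B-A) (C-A) := by
                simp [aspectDt]; ring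
              linarith))
      · have h := aspect_key C B A I O r R ρ hr hρ hρ2
          (hinperm C B A (by ext w; simp; tauto)) hOC hOB hOA
          (by have e : aspectDt (B-C) (A-C) = -aspectDt (B-A) (C-A) := by
                simp [aspectDt]; ring
              linarith)
        rw [EuclideanGeometry.angle_comm B C A] at h
        exact angle_bound C A B h
  constructor
  · have h := aspect_arccos_mono hKhalf
    calc Real.arccos ((1 + Real.sqrt (ρ * (ρ - 2))) / ρ) ≤ Real.arccos (1/2) := h
      _ = π / 3 := by
        rw [← Real.cos_pi_div_three]
        exact Real.arccos_cos (by positivity) (by linarith [Real.pi_pos])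
  · constructor
    · intro h
      have hK : (1 + Real.sqrt (ρ * (ρ - 2))) / ρ = 1/2 := by
        have h2 := congrArg Real.cos h
        rw [Real.cos_arccos hKm1 hK1, Real.cos_pi_div_three] at h2
        exact h2
      rw [hsdef] at hK
      have hseq : s = (ρ - 2)/2 := by
        field_simp at hK
        linarith
      rw [hseq] at hs
      by_contra hne
      have hlt : 2 < ρ := lt_of_le_of_ne hρ2 (fun hh => hne hh.symm)
      nlinarith [hs]
    · intro h
      subst h
      have : Real.sqrt (2 * ((2:ℝ) - 2)) = 0 := by
        norm_num
      rw [this]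
      norm_num
      rw [← Real.cos_pi_div_three]
      exact Real.arccos_cos (by positivity) (by linarith [Real.pi_pos])
end

section
/- Let p be a nearest vertex of a well-shaped tetrahedral mesh to a query point q with |pq| = 1, and let τ be the first tetrahedron intersected by segment pq. Then the intersection point p' of pq with the face of τ opposite p satisfies |pp'| > 6/(ρ²+3), where ρ bounds the ratio circumradius/inradius of every tetrahedron. -/
open RealInnerProductSpace

/-- In `ℝ³` there is a unit vector orthogonal to any two given vectors. -/
theorem exists_normal (x y : EuclideanSpace ℝ (Fin 3)) :
    ∃ n : EuclideanSpace ℝ (Fin 3), ‖n‖ = 1 ∧ ⟪n, x⟫ = 0 ∧ ⟪n, y⟫ = 0 := by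
  classical
  set K : Submodule ℝ (EuclideanSpace ℝ (Fin 3)) := Submodule.span ℝ {x, y} with hK
  have hcard : Module.finrank ℝ K ≤ 2 := by
    have hs : ({x, y} : Set (EuclideanSpace ℝ (Fin 3)))
        = ↑({x, y} : Finset (EuclideanSpace ℝ (Fin 3))) := by simp
    rw [hK, hs]
    exact le_trans (finrank_span_finset_le_card _) (le_trans (Finset.card_insert_le _ _) (by simp))
  have htot : Module.finrank ℝ K + Module.finrank ℝ Kᗮ = 3 := by
    rw [K.finrank_add_finrank_orthogonal]
    simp [finrank_euclideanSpace]
  have hpos : 0 < Module.finrank ℝ Kᗮ := by omega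
  have : Nontrivial Kᗮ := Module.finrank_pos_iff.1 hpos
  obtain ⟨m, hm0⟩ := exists_ne (0 : Kᗮ)
  have hmK : (m : EuclideanSpace ℝ (Fin 3)) ∈ Kᗮ := m.2
  have hmne : (m : EuclideanSpace ℝ (Fin 3)) ≠ 0 := fun h => hm0 (Subtype.ext h)
  refine ⟨‖(m : EuclideanSpace ℝ (Fin 3))‖⁻¹ • m, ?_, ?_, ?_⟩
  · simp [norm_smul, norm_ne_zero_iff.2 hmne, inv_mul_cancel₀]
  · rw [real_inner_smul_left]
    have := (Submodule.mem_orthogonal _ _).1 hmK x (Submodule.subset_span (by simp))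
    rw [real_inner_comm] at this; simp [this]
  · rw [real_inner_smul_left]
    have := (Submodule.mem_orthogonal _ _).1 hmK y (Submodule.subset_span (by simp))
    rw [real_inner_comm] at this; simp [this]

/-- A ball of radius `r` inside the tetrahedron `pbcd` forces the distance
from `p` to any point of the face `bcd` to be at least `2r` (slab argument). -/
theorem slab (p b c d I p' : EuclideanSpace ℝ (Fin 3)) (r : ℝ) (hr : 0 ≤ r)
    (hin : Metric.closedBall I r ⊆ convexHull ℝ {p, b, c, d})
    (hp'f : p' ∈ convexHull ℝ ({b, c, d} : Set (EuclideanSpace ℝ (Fin 3)))) :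
    2 * r ≤ dist p p' := by
  obtain ⟨n, hn1, hnc, hnd⟩ := exists_normal (c - b) (d - b)
  set f : EuclideanSpace ℝ (Fin 3) →ₗ[ℝ] ℝ := (innerSL ℝ n).toLinearMap with hf
  have hfc : f c = f b := by
    have : f c - f b = 0 := by simpa [hf, inner_sub_right] using hnc
    linarith
  have hfd : f d = f b := by
    have : f d - f b = 0 := by simpa [hf, inner_sub_right] using hnd
    linarith
  have hfp' : f p' = f b := by
    have hsub : convexHull ℝ ({b, c, d} : Set (EuclideanSpace ℝ (Fin 3))) ⊆ {x | f x = f b} := by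
      apply convexHull_min _ (convex_hyperplane f.isLinear (f b))
      intro x hx
      rcases hx with h | h | h <;> simp_all
    exact hsub hp'f
  set lo := min (f b) (f p) with hlo
  set hi := max (f b) (f p) with hhi
  have hullsub : convexHull ℝ ({p, b, c, d} : Set (EuclideanSpace ℝ (Fin 3)))
      ⊆ {x | lo ≤ f x} ∩ {x | f x ≤ hi} := by
    apply convexHull_min _
      ((convex_halfSpace_ge f.isLinear lo).inter (convex_halfSpace_le f.isLinear hi))
    intro x hx
    have hx' : f x = f b ∨ f x = f p := by
      rcases hx with h | h | h | h <;> subst h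
      · exact Or.inr rfl
      · exact Or.inl rfl
      · exact Or.inl hfc
      · exact Or.inl hfd
    constructor
    · show lo ≤ f x
      rcases hx' with h | h <;> rw [h, hlo]
      · exact min_le_left _ _
      · exact min_le_right _ _
    · show f x ≤ hi
      rcases hx' with h | h <;> rw [h, hhi]
      · exact le_max_left _ _
      · exact le_max_right _ _
  have hball : ∀ s : ℝ, |s| ≤ r → lo ≤ f I + s ∧ f I + s ≤ hi := by
    intro s hs
    have hmem : I + s • n ∈ Metric.closedBall I r := by
      simp only [Metric.mem_closedBall, dist_eq_norm, add_sub_cancel_left, norm_smul, hn1,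
        mul_one]
      exact hs
    have hfn : f n = 1 := by
      have h0 : (f n : ℝ) = ⟪n, n⟫ := rfl
      rw [h0, real_inner_self_eq_norm_sq, hn1]; norm_num
    have hfeq : f (I + s • n) = f I + s := by
      rw [map_add, map_smul, smul_eq_mul, hfn, mul_one]
    have hmem2 := hullsub (hin hmem)
    rw [Set.mem_inter_iff] at hmem2
    constructor
    · have := hmem2.1
      simp only [Set.mem_setOf_eq] at this
      rwa [hfeq] at this
    · have := hmem2.2
      simp only [Set.mem_setOf_eq] at this
      rwa [hfeq] at this
  have h1 := hball r (by rw [abs_of_nonneg hr])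
  have h2 := hball (-r) (by rw [abs_neg, abs_of_nonneg hr])
  have hwidth : 2 * r ≤ hi - lo := by
    have := h1.2; have := h2.1; linarith
  have hbound : hi - lo ≤ dist p p' := by
    have heq : hi - lo = |f p - f p'| := by
      rw [hfp', hlo, hhi]
      rcases le_total (f b) (f p) with h | h
      · rw [max_eq_right h, min_eq_left h, abs_of_nonneg (by linarith)]
      · rw [max_eq_left h, min_eq_right h, abs_of_nonpos (by linarith)]; ring
    rw [heq]
    have h2 : f p - f p' = ⟪n, p - p'⟫ := by simp [hf, inner_sub_right]
    rw [h2, dist_eq_norm]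
    calc |⟪n, p - p'⟫| ≤ ‖n‖ * ‖p - p'‖ := abs_real_inner_le_norm n (p - p')
      _ = ‖p - p'‖ := by rw [hn1, one_mul]
  linarith

/-- Norm of a convex combination of three vectors. -/
theorem combo_sq (u v w : EuclideanSpace ℝ (Fin 3)) (a b c : ℝ) (h : a + b + c = 1) :
    ‖a•u + b•v + c•w‖^2 = a*‖u‖^2 + b*‖v‖^2 + c*‖w‖^2
      - a*b*‖u-v‖^2 - a*c*‖u-w‖^2 - b*c*‖v-w‖^2 := by
  simp only [← real_inner_self_eq_norm_sq]
  simp only [inner_add_left, inner_add_right, inner_sub_left, inner_sub_right,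
    real_inner_smul_left, real_inner_smul_right]
  have h1 : ⟪v,u⟫ = ⟪u,v⟫ := real_inner_comm u v
  have h2 : ⟪w,u⟫ = ⟪u,w⟫ := real_inner_comm u w
  have h3 : ⟪w,v⟫ = ⟪v,w⟫ := real_inner_comm v w
  rw [h1, h2, h3]
  linear_combination ((⟪u,u⟫ : ℝ) * a + (⟪v,v⟫ : ℝ) * b + (⟪w,w⟫ : ℝ) * c) * h

/-- Barycentric coordinates for a point of the convex hull of a triangle. -/
theorem tri_weights (p' b c d : EuclideanSpace ℝ (Fin 3))
    (hp'f : p' ∈ convexHull ℝ ({b, c, d} : Set (EuclideanSpace ℝ (Fin 3)))) :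
    ∃ a₁ a₂ a₃ : ℝ, 0 ≤ a₁ ∧ 0 ≤ a₂ ∧ 0 ≤ a₃ ∧ a₁ + a₂ + a₃ = 1 ∧
      p' = a₁ • b + a₂ • c + a₃ • d := by
  rw [convexHull_insert ⟨c, by simp⟩, mem_convexJoin] at hp'f
  obtain ⟨b', hb', m, hm, hseg⟩ := hp'f
  rw [Set.mem_singleton_iff] at hb'
  subst hb'
  rw [convexHull_pair] at hm
  obtain ⟨u, u', hu, hu', huu, hueq⟩ := hm
  obtain ⟨t, t', ht, ht', htt, hteq⟩ := hseg
  refine ⟨t, t' * u, t' * u', ht, mul_nonneg ht' hu, mul_nonneg ht' hu', by nlinarith, ?_⟩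
  rw [← hteq, ← hueq, smul_add, smul_smul, smul_smul, add_assoc]

/-- Arithmetic core: the convex-combination identity forces `3(1-ψ²) ≤ 4R²`. -/
theorem edge_bound (a₁ a₂ a₃ A B C e₁ e₂ e₃ R ψ : ℝ)
    (ha₁ : 0 ≤ a₁) (ha₂ : 0 ≤ a₂) (ha₃ : 0 ≤ a₃) (hsum : a₁ + a₂ + a₃ = 1)
    (hA : 1 ≤ A) (hB : 1 ≤ B) (hC : 1 ≤ C)
    (he₁ : e₁ ^ 2 ≤ 4 * R ^ 2) (he₂ : e₂ ^ 2 ≤ 4 * R ^ 2) (he₃ : e₃ ^ 2 ≤ 4 * R ^ 2)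
    (key : ψ ^ 2 = a₁ * A ^ 2 + a₂ * B ^ 2 + a₃ * C ^ 2
      - a₁ * a₂ * e₁ ^ 2 - a₁ * a₃ * e₂ ^ 2 - a₂ * a₃ * e₃ ^ 2) :
    3 * (1 - ψ ^ 2) ≤ 4 * R ^ 2 := by
  have hA2 : 1 ≤ A ^ 2 := by nlinarith
  have hB2 : 1 ≤ B ^ 2 := by nlinarith
  have hC2 : 1 ≤ C ^ 2 := by nlinarith
  have hsum3 : a₁ * a₂ + a₁ * a₃ + a₂ * a₃ ≤ 1 / 3 := by
    nlinarith [sq_nonneg (a₁ - a₂), sq_nonneg (a₁ - a₃), sq_nonneg (a₂ - a₃)]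
  nlinarith [mul_nonneg ha₁ ha₂, mul_nonneg ha₁ ha₃, mul_nonneg ha₂ ha₃,
    mul_le_mul_of_nonneg_left he₁ (mul_nonneg ha₁ ha₂),
    mul_le_mul_of_nonneg_left he₂ (mul_nonneg ha₁ ha₃),
    mul_le_mul_of_nonneg_left he₃ (mul_nonneg ha₂ ha₃),
    mul_le_mul_of_nonneg_left hA2 ha₁,
    mul_le_mul_of_nonneg_left hB2 ha₂,
    mul_le_mul_of_nonneg_left hC2 ha₃, sq_nonneg R]

/-- Final arithmetic step. -/
theorem final_alg (ρ r R s : ℝ) (hρ : 3 ≤ ρ) (hr : 0 < r) (hR0 : 0 ≤ R)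
    (h2r : 2 * r ≤ s) (hedge : 3 * (1 - (1 - s) ^ 2) ≤ 4 * R ^ 2)
    (haspect : R < ρ * r) : 6 / (ρ ^ 2 + 3) < s := by
  have hspos : 0 < s := by linarith
  have hρpos : (0:ℝ) < ρ ^ 2 + 3 := by nlinarith
  rw [div_lt_iff₀ hρpos]
  have hρr : 0 < ρ * r := mul_pos (by linarith) hr
  have hRlt : R ^ 2 < (ρ * r) ^ 2 := by nlinarith
  have hrs : 4 * r ^ 2 ≤ s ^ 2 := by nlinarith
  have hR2 : 4 * R ^ 2 < ρ ^ 2 * s ^ 2 := by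
    nlinarith [mul_le_mul_of_nonneg_left hrs (show (0:ℝ) ≤ ρ ^ 2 by positivity)]
  have h1 : 3 * s * (2 - s) < ρ ^ 2 * s ^ 2 := by nlinarith
  nlinarith [mul_pos hspos hspos]

/-- Let `p` be a nearest mesh vertex to the query point `q`, normalized so that
`|pq| = 1` (so the other vertices `b`, `c`, `d` of the first crossed tetrahedron
`τ = pbcd` lie outside the open unit ball around `q`).  If `τ` has insphere
radius `r` and circumsphere radius `R` with `R < ρ·r`, and `p'` is the point
where the segment `pq` meets the face `bcd` opposite `p`, then
`|pp'| > 6/(ρ² + 3)`. -/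
theorem stmt11 (ρ r R : ℝ) (hρ : 3 ≤ ρ) (hr : 0 < r)
    (p q p' b c d I O : EuclideanSpace ℝ (Fin 3))
    (hpq : dist p q = 1)
    (hb : 1 ≤ dist q b) (hc : 1 ≤ dist q c) (hd : 1 ≤ dist q d)
    (hin : Metric.closedBall I r ⊆ convexHull ℝ {p, b, c, d})
    (hOp : dist O p = R) (hOb : dist O b = R) (hOc : dist O c = R) (hOd : dist O d = R)
    (haspect : R < ρ * r)
    (hp'f : p' ∈ convexHull ℝ ({b, c, d} : Set (EuclideanSpace ℝ (Fin 3))))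
    (hp'seg : p' ∈ segment ℝ p q) :
    6 / (ρ ^ 2 + 3) < dist p p' := by
  set s := dist p p' with hs
  have hsplit : dist p p' + dist p' q = 1 := by
    rw [← hpq]; exact dist_add_dist_of_mem_segment hp'seg
  have hR0 : 0 ≤ R := hOp ▸ dist_nonneg
  have h2r : 2 * r ≤ s := slab p b c d I p' r hr.le hin hp'f
  have hspos : 0 < s := lt_of_lt_of_le (by linarith) h2r
  -- edge bounds via the circumcenter
  have hbc : dist b c ≤ 2 * R := by
    calc dist b c ≤ dist b O + dist O c := dist_triangle b O c
      _ = 2 * R := by rw [dist_comm b O, hOb, hOc]; ring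
  have hbd : dist b d ≤ 2 * R := by
    calc dist b d ≤ dist b O + dist O d := dist_triangle b O d
      _ = 2 * R := by rw [dist_comm b O, hOb, hOd]; ring
  have hcd : dist c d ≤ 2 * R := by
    calc dist c d ≤ dist c O + dist O d := dist_triangle c O d
      _ = 2 * R := by rw [dist_comm c O, hOc, hOd]; ring
  obtain ⟨a₁, a₂, a₃, ha₁, ha₂, ha₃, hsum, hp'eq⟩ := tri_weights p' b c d hp'f
  have key := combo_sq (b - q) (c - q) (d - q) a₁ a₂ a₃ hsum
  have hcomb : a₁ • (b - q) + a₂ • (c - q) + a₃ • (d - q) = p' - q := by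
    have h1 : a₁ • (b - q) + a₂ • (c - q) + a₃ • (d - q)
        = (a₁ • b + a₂ • c + a₃ • d) - (a₁ + a₂ + a₃) • q := by
      simp only [smul_sub, add_smul]; abel
    rw [h1, hsum, one_smul, ← hp'eq]
  rw [hcomb] at key
  have e1 : b - q - (c - q) = b - c := by abel
  have e2 : b - q - (d - q) = b - d := by abel
  have e3 : c - q - (d - q) = c - d := by abel
  rw [e1, e2, e3] at key
  have nb : ‖b - q‖ = dist q b := by rw [dist_comm, dist_eq_norm]
  have nc : ‖c - q‖ = dist q c := by rw [dist_comm, dist_eq_norm]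
  have nd : ‖d - q‖ = dist q d := by rw [dist_comm, dist_eq_norm]
  have nbc : ‖b - c‖ = dist b c := (dist_eq_norm b c).symm
  have nbd : ‖b - d‖ = dist b d := (dist_eq_norm b d).symm
  have ncd : ‖c - d‖ = dist c d := (dist_eq_norm c d).symm
  have npq : ‖p' - q‖ = dist p' q := (dist_eq_norm p' q).symm
  rw [nb, nc, nd, nbc, nbd, ncd, npq] at key
  have hψ : dist p' q = 1 - s := by linarith
  rw [hψ] at key
  have sq2 : ∀ x : ℝ, 0 ≤ x → x ≤ 2 * R → x ^ 2 ≤ 4 * R ^ 2 := by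
    intro x hx0 hx
    calc x ^ 2 ≤ (2 * R) ^ 2 := pow_le_pow_left₀ hx0 hx 2
      _ = 4 * R ^ 2 := by ring
  have hedge : 3 * (1 - (1 - s) ^ 2) ≤ 4 * R ^ 2 :=
    edge_bound a₁ a₂ a₃ _ _ _ _ _ _ R (1 - s) ha₁ ha₂ ha₃ hsum hb hc hd
      (sq2 _ dist_nonneg hbc) (sq2 _ dist_nonneg hbd) (sq2 _ dist_nonneg hcd) key
  exact final_alg ρ r R s hρ hr hR0 h2r hedge haspect
end
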